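/- If m ≥ 2 and n ≥ 2 are integers with n ≡ 1 (mod 3), then the bondage number of K_m ⊠ P_n satisfies b(K_m ⊠ P_n) ≥ ⌈3m/2⌉; equivalently, for every edge set Z ⊆ E(K_m ⊠ P_n) with |Z| < ⌈3m/2⌉, one has γ(K_m ⊠ P_n − Z) = γ(K_m ⊠ P_n). -/

import Mathlib

open SimpleGraph Finset

/-- `D` is a dominating set of `G`: every vertex is in `D` or adjacent to a vertex of `D`. -/
def SimpleGraph.IsDominatingSet {V : Type*} (G : SimpleGraph V) (D : Set V) : Prop :=
  ∀ v : V, v ∈ D ∨ ∃ u ∈ D, G.Adj u v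

/-- The domination number of a finite graph. -/
noncomputable def SimpleGraph.dominationNumber {V : Type*} [Fintype V]
    (G : SimpleGraph V) : ℕ :=
  sInf {k | ∃ D : Finset V, D.card = k ∧ G.IsDominatingSet ↑D}

/-- The bondage number of a finite graph: the least size of a set of edges whose removal
increases the domination number. -/
noncomputable def SimpleGraph.bondageNumber {V : Type*} [Fintype V]
    (G : SimpleGraph V) : ℕ :=
  sInf {k | ∃ Z : Finset (Sym2 V), Z.card = k ∧ (↑Z : Set (Sym2 V)) ⊆ G.edgeSet ∧
    G.dominationNumber < (G.deleteEdges ↑Z).dominationNumber}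

/-- The strong product of two simple graphs. -/
def SimpleGraph.strongProd {V W : Type*} (G : SimpleGraph V) (H : SimpleGraph W) :
    SimpleGraph (V × W) :=
  SimpleGraph.fromRel (fun a b =>
    (a.1 = b.1 ∧ H.Adj a.2 b.2) ∨ (G.Adj a.1 b.1 ∧ a.2 = b.2) ∨
      (G.Adj a.1 b.1 ∧ H.Adj a.2 b.2))

infixl:70 " ⊠ " => SimpleGraph.strongProd

namespace BondageAux

variable {m n : ℕ}

abbrev KP (m n : ℕ) : SimpleGraph (Fin m × Fin n) :=
  (⊤ : SimpleGraph (Fin m)) ⊠ pathGraph n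

lemma KP_adj {a b : Fin m} {c d : Fin n} :
    (KP m n).Adj (a, c) (b, d) ↔
      (a, c) ≠ (b, d) ∧ (c = d ∨ c.val + 1 = d.val ∨ d.val + 1 = c.val) := by
  show (SimpleGraph.fromRel _).Adj _ _ ↔ _
  rw [SimpleGraph.fromRel_adj]
  simp only [top_adj, pathGraph_adj]
  constructor
  · rintro ⟨hne, h⟩
    refine ⟨hne, ?_⟩
    rcases h with (⟨_, h⟩|⟨_, h⟩|⟨_, h⟩) | (⟨_, h⟩|⟨_, h⟩|⟨_, h⟩)
    · tauto
    · exact Or.inl h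
    · tauto
    · tauto
    · exact Or.inl h.symm
    · tauto
  · rintro ⟨hne, h⟩
    refine ⟨hne, ?_⟩
    rcases h with h | h
    · subst h
      have : a ≠ b := fun hab => hne (by rw [hab])
      exact Or.inl (Or.inr (Or.inl ⟨this, rfl⟩))
    · by_cases hab : a = b
      · exact Or.inl (Or.inl ⟨hab, h⟩)
      · exact Or.inl (Or.inr (Or.inr ⟨hab, h⟩))

lemma KP_adj_of_near (u v : Fin m × Fin n) (hne : u ≠ v)
    (h1 : u.2.val ≤ v.2.val + 1) (h2 : v.2.val ≤ u.2.val + 1) : (KP m n).Adj u v := by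
  obtain ⟨a, c⟩ := u
  obtain ⟨b, d⟩ := v
  rw [KP_adj]
  refine ⟨hne, ?_⟩
  rcases Nat.lt_trichotomy c.val d.val with h | h | h
  · right; left; simp only at h1 h2 ⊢; omega
  · exact Or.inl (Fin.ext h)
  · right; right; simp only at h1 h2 ⊢; omega

/-- column pattern function -/
def colf (s t j : ℕ) : ℕ := if j < s then 3*j+1 else if j < t then 3*j else 3*j - 1

lemma colf_le {s t k : ℕ} (hsk : s ≤ k) (htk : t ≤ k + 1) {j : ℕ} (hj : j ≤ k) :
    colf s t j ≤ 3 * k := by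
  unfold colf; split_ifs <;> omega

lemma colf_inj {s t : ℕ} (hst : s ≤ t) {i j : ℕ} (h : colf s t i = colf s t j) : i = j := by
  unfold colf at h; split_ifs at h <;> omega

lemma cov {s t k : ℕ} (hst : s ≤ t) (ht1 : 1 ≤ t) (htk : t ≤ k + 1) (hsk : s ≤ k)
    {c : ℕ} (hc : c ≤ 3 * k) : ∃ j ≤ k, colf s t j ≤ c + 1 ∧ c ≤ colf s t j + 1 := by
  have hdm : 3 * (c / 3) + c % 3 = c := by omega
  have hmod : c % 3 = 0 ∨ c % 3 = 1 ∨ c % 3 = 2 := by omega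
  set q := c / 3 with hq
  rcases hmod with h | h | h
  · exact ⟨q, by omega, by unfold colf; split_ifs <;> omega⟩
  · by_cases hq2 : q < t
    · exact ⟨q, by omega, by unfold colf; split_ifs <;> omega⟩
    · exact ⟨q + 1, by omega, by unfold colf; split_ifs <;> omega⟩
  · by_cases hq2 : q + 1 < s
    · exact ⟨q, by omega, by unfold colf; split_ifs <;> omega⟩
    · exact ⟨q + 1, by omega, by unfold colf; split_ifs <;> omega⟩



lemma avoid_pair0 {k b1 b2 : ℕ} (hk : 1 ≤ k) (hb1 : b1 ≤ 3*k) (hb2 : b2 ≤ 3*k)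
    (h10 : b1 % 3 = 0) (h20 : b2 % 3 = 0) :
    ∃ s t, s ≤ t ∧ 1 ≤ t ∧ t ≤ k + 1 ∧ s ≤ k ∧
      ∀ j ≤ k, colf s t j ≠ b1 ∧ colf s t j ≠ b2 := by
  by_cases h1k : b1/3 ≤ k-1 <;> by_cases h2k : b2/3 ≤ k-1
  · by_cases hq : b1/3 ≤ b2/3
    · exact ⟨b2/3+1, k+1, by omega, by omega, by omega, by omega,
        fun j hj => ⟨by unfold colf; split_ifs <;> omega, by unfold colf; split_ifs <;> omega⟩⟩
    · exact ⟨b1/3+1, k+1, by omega, by omega, by omega, by omega,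
        fun j hj => ⟨by unfold colf; split_ifs <;> omega, by unfold colf; split_ifs <;> omega⟩⟩
  · exact ⟨b1/3+1, k, by omega, by omega, by omega, by omega,
      fun j hj => ⟨by unfold colf; split_ifs <;> omega, by unfold colf; split_ifs <;> omega⟩⟩
  · exact ⟨b2/3+1, k, by omega, by omega, by omega, by omega,
      fun j hj => ⟨by unfold colf; split_ifs <;> omega, by unfold colf; split_ifs <;> omega⟩⟩
  · exact ⟨0, k, by omega, by omega, by omega, by omega,
      fun j hj => ⟨by unfold colf; split_ifs <;> omega, by unfold colf; split_ifs <;> omega⟩⟩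

lemma avoid_pair1 {k b1 b2 : ℕ} (hk : 1 ≤ k) (hb1 : b1 ≤ 3*k) (hb2 : b2 ≤ 3*k)
    (h10 : b1 % 3 = 0) (h20 : b2 % 3 ≠ 0)
    (hf1 : ¬(b1 = 0 ∧ b2 = 1)) (hf3 : ¬(b1 = 3*k ∧ b2 = 3*k - 1)) :
    ∃ s t, s ≤ t ∧ 1 ≤ t ∧ t ≤ k + 1 ∧ s ≤ k ∧
      ∀ j ≤ k, colf s t j ≠ b1 ∧ colf s t j ≠ b2 := by
  by_cases h21 : b2 % 3 = 1
  · by_cases hq : b1/3 < b2/3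
    · exact ⟨b1/3+1, k+1, by omega, by omega, by omega, by omega,
        fun j hj => ⟨by unfold colf; split_ifs <;> omega, by unfold colf; split_ifs <;> omega⟩⟩
    · by_cases hq1 : 1 ≤ b1/3
      · exact ⟨0, b1/3, by omega, by omega, by omega, by omega,
          fun j hj => ⟨by unfold colf; split_ifs <;> omega, by unfold colf; split_ifs <;> omega⟩⟩
      · exact absurd (by omega : b1 = 0 ∧ b2 = 1) hf1
  · have h22 : b2 % 3 = 2 := by omega
    by_cases hq : b1/3 ≤ k - 1
    · exact ⟨b1/3+1, k+1, by omega, by omega, by omega, by omega,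
        fun j hj => ⟨by unfold colf; split_ifs <;> omega, by unfold colf; split_ifs <;> omega⟩⟩
    · by_cases hq2 : b2/3 ≤ k - 2
      · exact ⟨0, b2/3+2, by omega, by omega, by omega, by omega,
          fun j hj => ⟨by unfold colf; split_ifs <;> omega, by unfold colf; split_ifs <;> omega⟩⟩
      · exact absurd (by omega : b1 = 3*k ∧ b2 = 3*k - 1) hf3

lemma avoid {k b1 b2 : ℕ} (hk : 1 ≤ k) (hb1 : b1 ≤ 3*k) (hb2 : b2 ≤ 3*k)
    (hf1 : ¬(b1 = 0 ∧ b2 = 1)) (hf2 : ¬(b2 = 0 ∧ b1 = 1))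
    (hf3 : ¬(b1 = 3*k ∧ b2 = 3*k - 1)) (hf4 : ¬(b2 = 3*k ∧ b1 = 3*k - 1)) :
    ∃ s t, s ≤ t ∧ 1 ≤ t ∧ t ≤ k + 1 ∧ s ≤ k ∧
      ∀ j ≤ k, colf s t j ≠ b1 ∧ colf s t j ≠ b2 := by
  by_cases h10 : b1 % 3 = 0 <;> by_cases h20 : b2 % 3 = 0
  · exact avoid_pair0 hk hb1 hb2 h10 h20
  · exact avoid_pair1 hk hb1 hb2 h10 h20 hf1 hf3
  · obtain ⟨s, t, h1, h2, h3, h4, h5⟩ := avoid_pair1 hk hb2 hb1 h20 h10 hf2 hf4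
    exact ⟨s, t, h1, h2, h3, h4, fun j hj => ⟨(h5 j hj).2, (h5 j hj).1⟩⟩
  · exact ⟨0, k+1, by omega, by omega, by omega, by omega,
      fun j hj => ⟨by unfold colf; split_ifs <;> omega, by unfold colf; split_ifs <;> omega⟩⟩

/-! ### touched vertices and counting -/

def Touched (Z : Finset (Sym2 (Fin m × Fin n))) (v : Fin m × Fin n) : Prop :=
  ∃ e ∈ Z, v ∈ e

lemma not_mem_of_untouched {Z : Finset (Sym2 (Fin m × Fin n))} {u : Fin m × Fin n}
    (h : ¬ Touched Z u) (v : Fin m × Fin n) : s(u, v) ∉ Z :=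
  fun hm => h ⟨s(u, v), hm, Sym2.mem_mk_left u v⟩

lemma count_aux {α β : Type*} [Fintype α] [DecidableEq α] [DecidableEq β]
    (Z : Finset (Sym2 β)) (f : α → Sym2 β) (g : α → β) (hg : Function.Injective g)
    (hin : ∀ a, g a ∈ f a) (hf : ∀ a, f a ∈ Z) : Fintype.card α ≤ 2 * Z.card := by
  classical
  have hfib : ∀ e ∈ Z, (univ.filter (fun a => f a = e)).card ≤ 2 := by
    intro e _
    induction e using Sym2.ind with
    | _ x y =>
      have : (univ.filter (fun a => f a = s(x, y))).card ≤ ({x, y} : Finset β).card := by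
        apply Finset.card_le_card_of_injOn g
        · intro a ha
          simp only [Finset.mem_coe, Finset.mem_filter] at ha
          have := hin a
          rw [ha.2] at this
          rcases Sym2.mem_iff.mp this with h | h <;> simp [h]
        · exact hg.injOn
      calc (univ.filter (fun a => f a = s(x, y))).card ≤ ({x, y} : Finset β).card := this
        _ ≤ 2 := (Finset.card_insert_le _ _).trans (by simp)
  have hsum := Finset.card_eq_sum_card_fiberwise (fun a (_ : a ∈ (univ : Finset α)) => hf a)
  calc Fintype.card α = (univ : Finset α).card := rfl
    _ = ∑ e ∈ Z, (univ.filter (fun a => f a = e)).card := hsum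
    _ ≤ ∑ e ∈ Z, 2 := Finset.sum_le_sum hfib
    _ = 2 * Z.card := by rw [Finset.sum_const, smul_eq_mul, mul_comm]



lemma touch3 {Z : Finset (Sym2 (Fin m × Fin n))} (c : Fin 3 → Fin n)
    (hcinj : Function.Injective c)
    (h : ∀ i a, Touched Z (a, c i)) : 3 * m ≤ 2 * Z.card := by
  classical
  have hch : ∀ p : Fin m × Fin 3, ∃ e, e ∈ Z ∧ (p.1, c p.2) ∈ e := by
    intro p; obtain ⟨e, he, hm⟩ := h p.2 p.1; exact ⟨e, he, hm⟩
  choose f hfZ hfin using hch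
  have := count_aux Z f (fun p => (p.1, c p.2))
    (fun p q hpq => by
      simp only [Prod.mk.injEq] at hpq
      exact Prod.ext hpq.1 (hcinj hpq.2)) hfin hfZ
  simpa [Fintype.card_prod, mul_comm] using this

lemma gencount {Z : Finset (Sym2 (Fin m × Fin n))} {x y : Fin n} (hxy : x ≠ y)
    (hY : ∀ a : Fin m, ∃ b, s(((a, y) : Fin m × Fin n), (b, x)) ∈ Z)
    (hX : ∀ a : Fin m, ∃ b, s(((a, x) : Fin m × Fin n), (b, x)) ∈ Z) :
    3 * m ≤ 2 * Z.card := by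
  classical
  choose bY hbY using hY
  choose bX hbX using hX
  set f1 : Fin m → Sym2 (Fin m × Fin n) := fun a => s((a, y), (bY a, x)) with hf1
  set f2 : Fin m → Sym2 (Fin m × Fin n) := fun a => s((a, x), (bX a, x)) with hf2
  have hinj1 : Function.Injective f1 := by
    intro a a' h
    simp only [hf1, Sym2.eq_iff, Prod.mk.injEq] at h
    rcases h with ⟨⟨h, _⟩, _⟩ | ⟨⟨_, h⟩, _⟩
    · exact h
    · exact absurd h (Ne.symm hxy)
  set S1 : Finset (Sym2 (Fin m × Fin n)) := univ.image f1 with hS1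
  set S2 : Finset (Sym2 (Fin m × Fin n)) := univ.image f2 with hS2
  have hS1card : S1.card = m := by
    rw [hS1, Finset.card_image_of_injective _ hinj1, Finset.card_univ, Fintype.card_fin]
  have hS2card : m ≤ 2 * S2.card := by
    have := count_aux S2 f2 (fun a => (a, x))
      (fun a a' h => congrArg Prod.fst h)
      (fun a => Sym2.mem_mk_left _ _)
      (fun a => Finset.mem_image_of_mem _ (Finset.mem_univ a))
    simpa using this
  have hdisj : Disjoint S1 S2 := by
    rw [Finset.disjoint_left]
    intro e he1 he2
    simp only [hS1, hS2, Finset.mem_image, Finset.mem_univ, true_and] at he1 he2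
    obtain ⟨a, ha⟩ := he1
    obtain ⟨a', ha'⟩ := he2
    rw [← ha'] at ha
    simp only [hf1, hf2, Sym2.eq_iff, Prod.mk.injEq] at ha
    rcases ha with ⟨⟨_, h⟩, _⟩ | ⟨⟨_, h⟩, _⟩ <;> exact hxy h.symm
  have hsub : S1 ∪ S2 ⊆ Z := by
    apply Finset.union_subset <;>
      · rw [Finset.image_subset_iff]
        intro a _
        first | exact hbY a | exact hbX a
  have hcard : S1.card + S2.card ≤ Z.card := by
    rw [← Finset.card_union_of_disjoint hdisj]
    exact Finset.card_le_card hsub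
  omega

/-- Build a dominating set of the edge-deleted graph from a window function. -/
lemma build {k : ℕ} (Z : Finset (Sym2 (Fin m × Fin n))) (w : ℕ → Fin m × Fin n)
    (hinj : ∀ i ≤ k, ∀ j ≤ k, (w i).2 = (w j).2 → i = j)
    (hdom : ∀ v : Fin m × Fin n, ∃ j ≤ k, v = w j ∨
      (((w j).2.val ≤ v.2.val + 1 ∧ v.2.val ≤ (w j).2.val + 1) ∧ s(w j, v) ∉ Z)) :
    ∃ D : Finset (Fin m × Fin n), D.card = k + 1 ∧
      ((KP m n).deleteEdges ↑Z).IsDominatingSet ↑D := by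
  classical
  refine ⟨(Finset.range (k+1)).image w, ?_, ?_⟩
  · rw [Finset.card_image_of_injOn, Finset.card_range]
    intro i hi j hj hij
    rw [Finset.mem_coe, Finset.mem_range] at hi hj
    exact hinj i (by omega) j (by omega) (congrArg Prod.snd hij)
  · intro v
    obtain ⟨j, hj, hcase⟩ := hdom v
    have hwj : w j ∈ ((Finset.range (k+1)).image w : Finset (Fin m × Fin n)) :=
      Finset.mem_image_of_mem _ (Finset.mem_range.mpr (by omega))
    by_cases hv : v = w j
    · left; rw [Finset.mem_coe, hv]; exact hwj
    · rcases hcase with rfl | ⟨⟨h1, h2⟩, hz⟩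
      · exact absurd rfl hv
      · right
        refine ⟨w j, Finset.mem_coe.mpr hwj, ?_⟩
        rw [SimpleGraph.deleteEdges_adj]
        exact ⟨KP_adj_of_near _ _ (fun h => hv h.symm) h1 h2, by simpa using hz⟩

/-- lower bound for domination number of any subgraph of KP -/
lemma lb {k : ℕ} (hn3 : n = 3*k+1) (hm : 1 ≤ m) (H : SimpleGraph (Fin m × Fin n))
    (hHG : H ≤ KP m n) (D : Finset (Fin m × Fin n))
    (hD : H.IsDominatingSet ↑D) : k + 1 ≤ D.card := by
  classical
  have hn0 : 0 < n := by omega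
  have hrow : (0 : ℕ) < m := hm
  have hch : ∀ c : Fin n, ∃ u : Fin m × Fin n, u ∈ D ∧
      u.2.val ≤ c.val + 1 ∧ c.val ≤ u.2.val + 1 := by
    intro c
    rcases hD (⟨0, hrow⟩, c) with h | ⟨u, hu, hadj⟩
    · exact ⟨(⟨0, hrow⟩, c), Finset.mem_coe.mp h, Nat.le_succ _, Nat.le_succ _⟩
    · obtain ⟨u1, u2⟩ := u
      have hadj' := hHG hadj
      rw [KP_adj] at hadj'
      have hcol : u2.val = c.val ∨ u2.val + 1 = c.val ∨ c.val + 1 = u2.val := by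
        rcases hadj'.2 with h | h | h
        · exact Or.inl (congrArg Fin.val h)
        · omega
        · omega
      exact ⟨(u1, u2), Finset.mem_coe.mp hu,
        by show u2.val ≤ c.val + 1; omega, by show c.val ≤ u2.val + 1; omega⟩
  choose g hgD hg1 hg2 using hch
  have hsum := Finset.card_eq_sum_card_fiberwise (fun c (_ : c ∈ (univ : Finset (Fin n))) => hgD c)
  have hfib : ∀ u ∈ D, (univ.filter (fun c => g c = u)).card ≤ 3 := by
    intro u _
    have : (univ.filter (fun c => g c = u)).card ≤
        ({u.2.val - 1, u.2.val, u.2.val + 1} : Finset ℕ).card := by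
      apply Finset.card_le_card_of_injOn (fun c => c.val)
      · intro c hc
        simp only [Finset.mem_coe, Finset.mem_filter] at hc
        have h1 := hg1 c; have h2 := hg2 c
        rw [hc.2] at h1 h2
        simp only [Finset.mem_coe, Finset.mem_insert, Finset.mem_singleton]
        omega
      · intro c _ c' _ h
        exact Fin.ext h
    refine this.trans ?_
    refine (Finset.card_insert_le _ _).trans ?_
    refine Nat.succ_le_succ ((Finset.card_insert_le _ _).trans ?_)
    simp
  have : n ≤ 3 * D.card := by
    calc n = (univ : Finset (Fin n)).card := by simp
      _ = ∑ u ∈ D, (univ.filter (fun c => g c = u)).card := hsum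
      _ ≤ ∑ u ∈ D, 3 := Finset.sum_le_sum hfib
      _ = 3 * D.card := by rw [Finset.sum_const, smul_eq_mul, mul_comm]
  omega



def cfin (n : ℕ) (hn0 : 0 < n) (c : ℕ) : Fin n := ⟨c % n, Nat.mod_lt _ hn0⟩

lemma cfin_val {n : ℕ} (hn0 : 0 < n) {c : ℕ} (hc : c < n) : (cfin n hn0 c).val = c :=
  Nat.mod_eq_of_lt hc

lemma touch3' {Z : Finset (Sym2 (Fin m × Fin n))} {c1 c2 c3 : Fin n}
    (h12 : c1 ≠ c2) (h13 : c1 ≠ c3) (h23 : c2 ≠ c3)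
    (t1 : ∀ a, Touched Z (a, c1)) (t2 : ∀ a, Touched Z (a, c2))
    (t3 : ∀ a, Touched Z (a, c3)) :
    3 * m ≤ 2 * Z.card := by
  apply touch3 (c := ![c1, c2, c3])
  · intro i j hij
    fin_cases i <;> fin_cases j <;> simp_all
  · intro i a
    fin_cases i
    · simpa using t1 a
    · simpa using t2 a
    · simpa using t3 a

/-- covering lemma for the left boundary families (t = 1) -/
lemma cov2L {s k c : ℕ} (hs : s ≤ 1) (hk : 1 ≤ k) (hc : c ≤ 3*k) (hc1 : 1 ≤ c) :
    ∃ j ≤ k, j ≠ 0 ∧ colf s 1 j ≤ c + 1 ∧ c ≤ colf s 1 j + 1 := by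
  refine ⟨(c+2)/3, by omega, by omega, ?_, ?_⟩ <;> (unfold colf; split_ifs <;> omega)

/-- covering lemma for the right boundary families (s = k) -/
lemma cov2R {t k c : ℕ} (ht : k ≤ t) (hk : 1 ≤ k) (hc : c ≤ 3*k) (hc1 : c ≠ 3*k) :
    ∃ j ≤ k, j ≠ k ∧ colf k t j ≤ c + 1 ∧ c ≤ colf k t j + 1 := by
  refine ⟨c/3, by omega, by omega, ?_, ?_⟩ <;> (unfold colf; split_ifs <;> omega)

/-- Build a dominating set with one special vertex `(a, colf s t jsp)` in charge of
column `ct`, and untouched vertices elsewhere. -/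
lemma build2 {k : ℕ} (hn3 : n = 3*k+1) (hn0 : 0 < n) (Z : Finset (Sym2 (Fin m × Fin n)))
    (s t jsp ct : ℕ) (hst : s ≤ t) (hsk : s ≤ k) (hjsp : jsp ≤ k)
    (hct : ct ≤ 3*k) (hcolf : ∀ j ≤ k, colf s t j ≤ 3*k)
    (hnear1 : colf s t jsp ≤ ct + 1) (hnear2 : ct ≤ colf s t jsp + 1)
    (hcov2 : ∀ c ≤ 3*k, c ≠ ct → ∃ j ≤ k, j ≠ jsp ∧ colf s t j ≤ c + 1 ∧ c ≤ colf s t j + 1)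
    (hgood : ∀ j ≤ k, j ≠ jsp → ∃ a : Fin m, ¬ Touched Z (a, cfin n hn0 (colf s t j)))
    (a : Fin m)
    (ha : ∀ v : Fin m × Fin n, v.2.val = ct → s(((a, cfin n hn0 (colf s t jsp)) : Fin m × Fin n), v) ∉ Z) :
    ∃ D : Finset (Fin m × Fin n), D.card = k + 1 ∧
      ((KP m n).deleteEdges ↑Z).IsDominatingSet ↑D := by
  classical
  set w : ℕ → Fin m × Fin n := fun j =>
    if hj : j ≤ k ∧ j ≠ jsp then ((hgood j hj.1 hj.2).choose, cfin n hn0 (colf s t j))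
    else (a, cfin n hn0 (colf s t jsp)) with hw
  have hwval : ∀ j ≤ k, (w j).2.val = colf s t j := by
    intro j hj
    by_cases hjs : j = jsp
    · subst hjs
      rw [hw]
      simp only [dif_neg (fun h : j ≤ k ∧ j ≠ j => h.2 rfl)]
      exact cfin_val hn0 (by have := hcolf j hj; omega)
    · rw [hw]
      simp only [dif_pos (⟨hj, hjs⟩ : j ≤ k ∧ j ≠ jsp)]
      exact cfin_val hn0 (by have := hcolf j hj; omega)
  have hwsp : w jsp = (a, cfin n hn0 (colf s t jsp)) := by
    rw [hw]; simp only [dif_neg (fun h : jsp ≤ k ∧ jsp ≠ jsp => h.2 rfl)]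
  apply build Z w
  · intro i hi j hj hij
    have h1 := hwval i hi
    have h2 := hwval j hj
    rw [hij] at h1
    exact colf_inj hst (h1.symm.trans h2)
  · intro v
    have hv : v.2.val ≤ 3*k := by have := v.2.isLt; omega
    by_cases hd : v.2.val = ct
    · refine ⟨jsp, hjsp, Or.inr ⟨⟨?_, ?_⟩, ?_⟩⟩
      · rw [hwval jsp hjsp]; omega
      · rw [hwval jsp hjsp]; omega
      · rw [hwsp]; exact ha v hd
    · obtain ⟨j, hjk, hjne, hb1, hb2⟩ := hcov2 v.2.val hv hd
      refine ⟨j, hjk, Or.inr ⟨⟨?_, ?_⟩, ?_⟩⟩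
      · rw [hwval j hjk]; omega
      · rw [hwval j hjk]; omega
      · apply not_mem_of_untouched
        rw [hw]
        simp only [dif_pos (⟨hjk, hjne⟩ : j ≤ k ∧ j ≠ jsp)]
        exact (hgood j hjk hjne).choose_spec



lemma main_construct {k : ℕ} (hn3 : n = 3*k+1) (hk : 1 ≤ k) (hm : 2 ≤ m)
    (Z : Finset (Sym2 (Fin m × Fin n))) (hcard : 2 * Z.card < 3 * m) :
    ∃ D : Finset (Fin m × Fin n), D.card = k + 1 ∧
      ((KP m n).deleteEdges ↑Z).IsDominatingSet ↑D := by
  classical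
  have hn0 : 0 < n := by omega
  have hcfne : ∀ {x y : ℕ}, x ≤ 3*k → y ≤ 3*k → x ≠ y →
      cfin n hn0 x ≠ cfin n hn0 y := by
    intro x y hx hy hxy h
    have := congrArg Fin.val h
    rw [cfin_val hn0 (by omega), cfin_val hn0 (by omega)] at this
    exact hxy this
  by_cases hP : ∃ s t, s ≤ t ∧ 1 ≤ t ∧ t ≤ k+1 ∧ s ≤ k ∧
      ∀ j ≤ k, ∃ a : Fin m, ¬ Touched Z (a, cfin n hn0 (colf s t j))
  · obtain ⟨s, t, hst, ht1, htk, hsk, hgood⟩ := hP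
    set w : ℕ → Fin m × Fin n := fun j =>
      if hj : j ≤ k then ((hgood j hj).choose, cfin n hn0 (colf s t j))
      else ((hgood 0 (by omega)).choose, cfin n hn0 (colf s t 0)) with hw
    have hwval : ∀ j ≤ k, (w j).2.val = colf s t j := by
      intro j hj
      rw [hw]; simp only [dif_pos hj]
      exact cfin_val hn0 (by have := colf_le hsk htk hj; omega)
    have hwunt : ∀ j ≤ k, ¬ Touched Z (w j) := by
      intro j hj
      rw [hw]; simp only [dif_pos hj]
      exact (hgood j hj).choose_spec
    apply build Z w
    · intro i hi j hj hij
      have h1 := hwval i hi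
      have h2 := hwval j hj
      rw [hij] at h1
      exact colf_inj hst (h1.symm.trans h2)
    · intro v
      have hv : v.2.val ≤ 3*k := by have := v.2.isLt; omega
      obtain ⟨j, hj, hb1, hb2⟩ := cov hst ht1 htk hsk hv
      refine ⟨j, hj, Or.inr ⟨⟨?_, ?_⟩, not_mem_of_untouched (hwunt j hj) v⟩⟩
      · rw [hwval j hj]; omega
      · rw [hwval j hj]; omega
  · push_neg at hP
    obtain ⟨j1, hj1, hbad1⟩ := hP 0 (k+1) (by omega) (by omega) (by omega) (by omega)
    have hB1val : colf 0 (k+1) j1 = 3*j1 := by unfold colf; split_ifs <;> omega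
    set B1 := colf 0 (k+1) j1 with hB1def
    have hB1le : B1 ≤ 3*k := by omega
    have hB1mod : B1 % 3 = 0 := by omega
    obtain ⟨s1, t1, hst1, ht11, htk1, hsk1, havoid1⟩ :=
      avoid (b1 := B1) (b2 := B1) hk hB1le hB1le (by omega) (by omega) (by omega) (by omega)
    obtain ⟨j2, hj2, hbad2⟩ := hP s1 t1 hst1 ht11 htk1 hsk1
    set B2 := colf s1 t1 j2 with hB2def
    have hB2le : B2 ≤ 3*k := by rw [hB2def]; exact colf_le hsk1 htk1 hj2
    have hB21 : B2 ≠ B1 := by rw [hB2def]; exact (havoid1 j2 hj2).1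
    by_cases hfat : (B1 = 0 ∧ B2 = 1) ∨ (B1 = 3*k ∧ B2 = 3*k - 1)
    · have hgoodrest : ∀ c ≤ 3*k, c ≠ B1 → c ≠ B2 →
          ∃ a : Fin m, ¬ Touched Z (a, cfin n hn0 c) := by
        intro c hc hc1 hc2
        by_contra hno
        push_neg at hno
        have h3 := touch3' (hcfne hB1le hB2le (Ne.symm hB21))
          (hcfne hB1le hc (Ne.symm hc1)) (hcfne hB2le hc (Ne.symm hc2))
          hbad1 hbad2 hno
        omega
      rcases hfat with ⟨hB10, hB21v⟩ | ⟨hB1k, hB2k⟩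
      · -- Left boundary: columns 0 and 1 are bad
        rw [hB10] at hbad1
        rw [hB21v] at hbad2
        by_cases h2a : ∃ a : Fin m, ∀ b : Fin m,
            s(((a, cfin n hn0 1) : Fin m × Fin n), (b, cfin n hn0 0)) ∉ Z
        · obtain ⟨a, ha⟩ := h2a
          have hc110 : colf 1 1 0 = 1 := by norm_num [colf]
          refine build2 hn3 hn0 Z 1 1 0 0 le_rfl (by omega) (by omega) (by omega)
            (fun j hj => colf_le (by omega) (by omega) hj)
            (by rw [hc110]) (by omega)
            (fun c hc hc0 => cov2L le_rfl hk hc (by omega))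
            (fun j hj hj0 => hgoodrest _ (colf_le (by omega) (by omega) hj)
              (by rw [hB10]; unfold colf; split_ifs <;> omega)
              (by rw [hB21v]; unfold colf; split_ifs <;> omega))
            a ?_
          intro v hv
          have hveq : v = (v.1, cfin n hn0 0) :=
            Prod.ext rfl (Fin.ext (by rw [cfin_val hn0 (by omega)]; exact hv))
          rw [hc110, hveq]
          exact ha v.1
        · by_cases h2b : ∃ a : Fin m, ∀ b : Fin m,
              s(((a, cfin n hn0 0) : Fin m × Fin n), (b, cfin n hn0 0)) ∉ Z
          · obtain ⟨a, ha⟩ := h2b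
            have hc010 : colf 0 1 0 = 0 := by norm_num [colf]
            refine build2 hn3 hn0 Z 0 1 0 0 (by omega) (by omega) (by omega) (by omega)
              (fun j hj => colf_le (by omega) (by omega) hj)
              (by rw [hc010]; omega) (by rw [hc010]; omega)
              (fun c hc hc0 => cov2L (by omega) hk hc (by omega))
              (fun j hj hj0 => hgoodrest _ (colf_le (by omega) (by omega) hj)
                (by rw [hB10]; unfold colf; split_ifs <;> omega)
                (by rw [hB21v]; unfold colf; split_ifs <;> omega))
              a ?_
            intro v hv
            have hveq : v = (v.1, cfin n hn0 0) :=
              Prod.ext rfl (Fin.ext (by rw [cfin_val hn0 (by omega)]; exact hv))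
            rw [hc010, hveq]
            exact ha v.1
          · push_neg at h2a h2b
            have hxy : cfin n hn0 0 ≠ cfin n hn0 1 := hcfne (by omega) (by omega) (by omega)
            have := gencount hxy h2a h2b
            omega
      · -- Right boundary: columns 3k and 3k-1 are bad
        rw [hB1k] at hbad1
        rw [hB2k] at hbad2
        by_cases h2a : ∃ a : Fin m, ∀ b : Fin m,
            s(((a, cfin n hn0 (3*k-1)) : Fin m × Fin n), (b, cfin n hn0 (3*k))) ∉ Z
        · obtain ⟨a, ha⟩ := h2a
          have hckk : colf k k k = 3*k-1 := by unfold colf; split_ifs <;> omega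
          refine build2 hn3 hn0 Z k k k (3*k) le_rfl le_rfl le_rfl le_rfl
            (fun j hj => colf_le le_rfl (by omega) hj)
            (by rw [hckk]; omega) (by rw [hckk]; omega)
            (fun c hc hcne => cov2R le_rfl hk hc hcne)
            (fun j hj hjk => hgoodrest _ (colf_le le_rfl (by omega) hj)
              (by rw [hB1k]; unfold colf; split_ifs <;> omega)
              (by rw [hB2k]; unfold colf; split_ifs <;> omega))
            a ?_
          intro v hv
          have hveq : v = (v.1, cfin n hn0 (3*k)) :=
            Prod.ext rfl (Fin.ext (by rw [cfin_val hn0 (by omega)]; exact hv))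
          rw [hckk, hveq]
          exact ha v.1
        · by_cases h2b : ∃ a : Fin m, ∀ b : Fin m,
              s(((a, cfin n hn0 (3*k)) : Fin m × Fin n), (b, cfin n hn0 (3*k))) ∉ Z
          · obtain ⟨a, ha⟩ := h2b
            have hckk1 : colf k (k+1) k = 3*k := by unfold colf; split_ifs <;> omega
            refine build2 hn3 hn0 Z k (k+1) k (3*k) (by omega) le_rfl le_rfl le_rfl
              (fun j hj => colf_le le_rfl (by omega) hj)
              (by rw [hckk1]; omega) (by rw [hckk1]; omega)
              (fun c hc hcne => cov2R (by omega) hk hc hcne)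
              (fun j hj hjk => hgoodrest _ (colf_le le_rfl (by omega) hj)
                (by rw [hB1k]; unfold colf; split_ifs <;> omega)
                (by rw [hB2k]; unfold colf; split_ifs <;> omega))
              a ?_
            intro v hv
            have hveq : v = (v.1, cfin n hn0 (3*k)) :=
              Prod.ext rfl (Fin.ext (by rw [cfin_val hn0 (by omega)]; exact hv))
            rw [hckk1, hveq]
            exact ha v.1
          · push_neg at h2a h2b
            have hxy : cfin n hn0 (3*k) ≠ cfin n hn0 (3*k-1) :=
              hcfne (by omega) (by omega) (by omega)
            have := gencount hxy h2a h2b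
            omega
    · have hf1 : ¬(B1 = 0 ∧ B2 = 1) := fun h => hfat (Or.inl h)
      have hf2 : ¬(B2 = 0 ∧ B1 = 1) := by omega
      have hf3 : ¬(B1 = 3*k ∧ B2 = 3*k - 1) := fun h => hfat (Or.inr h)
      have hf4 : ¬(B2 = 3*k ∧ B1 = 3*k - 1) := by omega
      obtain ⟨s2, t2, hst2, ht12, htk2, hsk2, havoid2⟩ :=
        avoid hk hB1le hB2le hf1 hf2 hf3 hf4
      obtain ⟨j3, hj3, hbad3⟩ := hP s2 t2 hst2 ht12 htk2 hsk2
      set B3 := colf s2 t2 j3 with hB3def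
      have hB3le : B3 ≤ 3*k := by rw [hB3def]; exact colf_le hsk2 htk2 hj3
      have hB31 : B3 ≠ B1 := by rw [hB3def]; exact (havoid2 j3 hj3).1
      have hB32 : B3 ≠ B2 := by rw [hB3def]; exact (havoid2 j3 hj3).2
      have h3 := touch3' (hcfne hB1le hB2le (Ne.symm hB21))
        (hcfne hB1le hB3le (Ne.symm hB31)) (hcfne hB2le hB3le (Ne.symm hB32))
        hbad1 hbad2 hbad3
      omega



lemma domnum_del {k : ℕ} (hn3 : n = 3*k+1) (hk : 1 ≤ k) (hm : 2 ≤ m)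
    (Z : Finset (Sym2 (Fin m × Fin n))) (hcard : 2 * Z.card < 3 * m) :
    ((KP m n).deleteEdges ↑Z).dominationNumber = k + 1 := by
  obtain ⟨D, hc, hd⟩ := main_construct hn3 hk hm Z hcard
  unfold SimpleGraph.dominationNumber
  apply le_antisymm
  · exact Nat.sInf_le ⟨D, hc, hd⟩
  · refine le_csInf ?_ ?_
    · exact ⟨k+1, D, hc, hd⟩
    rintro x ⟨D', hc', hd'⟩
    rw [← hc']
    exact lb hn3 (by omega) _ (SimpleGraph.deleteEdges_le _) D' hd'

lemma domnum_G {k : ℕ} (hn3 : n = 3*k+1) (hk : 1 ≤ k) (hm : 2 ≤ m) :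
    (KP m n).dominationNumber = k + 1 := by
  have h := domnum_del hn3 hk hm (∅ : Finset (Sym2 (Fin m × Fin n))) (by simp; omega)
  rwa [Finset.coe_empty, SimpleGraph.deleteEdges_empty] at h

lemma domnum_bot_ge {k : ℕ} (hn3 : n = 3*k+1) (hm : 2 ≤ m) :
    k + 2 ≤ ((⊥ : SimpleGraph (Fin m × Fin n))).dominationNumber := by
  unfold SimpleGraph.dominationNumber
  refine le_csInf ?_ ?_
  · exact ⟨Fintype.card (Fin m × Fin n), Finset.univ, by simp, fun v => Or.inl (by simp)⟩
  · rintro x ⟨D, hc, hd⟩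
    have huniv : (Finset.univ : Finset (Fin m × Fin n)) ⊆ D := by
      intro v _
      rcases hd v with h | ⟨u, _, hadj⟩
      · exact Finset.mem_coe.mp h
      · exact absurd hadj (by simp)
    have h1 : Fintype.card (Fin m × Fin n) ≤ D.card := by
      rw [← Finset.card_univ]
      exact Finset.card_le_card huniv
    have h2 : Fintype.card (Fin m × Fin n) = m * n := by simp
    have h3 : 2 * n ≤ m * n := Nat.mul_le_mul_right n hm
    omega

open scoped Classical in
noncomputable def allE (m n : ℕ) : Finset (Sym2 (Fin m × Fin n)) :=
  Finset.univ.filter (fun e => e ∈ (KP m n).edgeSet)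

lemma allE_sub : (↑(allE m n) : Set (Sym2 (Fin m × Fin n))) ⊆ (KP m n).edgeSet := by
  intro e he
  have := Finset.mem_coe.mp he
  unfold allE at this
  classical
  simpa using (Finset.mem_filter.mp this).2

lemma del_all_eq_bot : (KP m n).deleteEdges ↑(allE m n) = ⊥ := by
  classical
  ext u v
  simp only [SimpleGraph.deleteEdges_adj, SimpleGraph.bot_adj, iff_false, not_and, not_not]
  intro h
  have : s(u, v) ∈ (KP m n).edgeSet := h
  unfold allE
  simp only [Finset.coe_filter, Finset.mem_univ, true_and, Set.mem_setOf_eq]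
  exact this

end BondageAux

open BondageAux in
/-- **Lemma.** If `m ≥ 2`, `n ≥ 2` and `n ≡ 1 (mod 3)`, then `b(K_m ⊠ P_n) ≥ ⌈3m/2⌉`;
equivalently, removing any set of fewer than `⌈3m/2⌉` edges does not change the
domination number. -/
theorem bondage_ge_of_mod_three_eq_one (m n : ℕ) (hm : 2 ≤ m) (hn : 2 ≤ n)
    (h3 : n % 3 = 1) :
    (3 * m + 1) / 2 ≤ ((⊤ : SimpleGraph (Fin m)) ⊠ pathGraph n).bondageNumber ∧
    ∀ Z : Finset (Sym2 (Fin m × Fin n)),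
      (↑Z : Set (Sym2 (Fin m × Fin n))) ⊆
          ((⊤ : SimpleGraph (Fin m)) ⊠ pathGraph n).edgeSet →
      Z.card < (3 * m + 1) / 2 →
      (((⊤ : SimpleGraph (Fin m)) ⊠ pathGraph n).deleteEdges ↑Z).dominationNumber =
        ((⊤ : SimpleGraph (Fin m)) ⊠ pathGraph n).dominationNumber := by
  have hk : 1 ≤ n / 3 := by omega
  have hn3 : n = 3 * (n / 3) + 1 := by omega
  constructor
  · show (3 * m + 1) / 2 ≤ (KP m n).bondageNumber
    unfold SimpleGraph.bondageNumber
    have hne : {k | ∃ Z : Finset (Sym2 (Fin m × Fin n)), Z.card = k ∧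
        (↑Z : Set (Sym2 (Fin m × Fin n))) ⊆ (KP m n).edgeSet ∧
        (KP m n).dominationNumber < ((KP m n).deleteEdges ↑Z).dominationNumber}.Nonempty := by
      refine ⟨(allE m n).card, allE m n, rfl, allE_sub, ?_⟩
      rw [del_all_eq_bot, domnum_G hn3 hk hm]
      have := domnum_bot_ge (m := m) hn3 hm
      omega
    obtain ⟨Zs, hcZ, hZe, hlt⟩ := Nat.sInf_mem hne
    by_contra hcon
    push_neg at hcon
    have h2 : 2 * Zs.card < 3 * m := by omega
    rw [domnum_del hn3 hk hm Zs h2, domnum_G hn3 hk hm] at hlt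
    omega
  · intro Z hZe hZcard
    have h2 : 2 * Z.card < 3 * m := by omega
    show ((KP m n).deleteEdges ↑Z).dominationNumber = (KP m n).dominationNumber
    rw [domnum_del hn3 hk hm Z h2, domnum_G hn3 hk hm]
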